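/- Let C be a union of d distinct lines in ℙ² over a field and let P₀, P₁, P₂ be three distinct points with m(P₀) + m(P₁) + m(P₂) = d + 3. Then: (1) P₀, P₁, P₂ are not collinear; (2) the three lines joining pairs of the points P₀, P₁, P₂ are components of C; (3) every line of C passes through at least one of P₀, P₁, P₂. -/

import Mathlib

open scoped Classical

/-- A (projective) line in `ℙ²` over `K`: the zero locus of a nonzero linear functional. -/
def IsLine {K : Type*} [Field K] (ℓ : Set (Projectivization K (Fin 3 → K))) : Prop :=
  ∃ φ : Module.Dual K (Fin 3 → K), φ ≠ 0 ∧ ℓ = {P | φ P.rep = 0}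

/-- The number of lines of the arrangement `L` passing through `P`. -/
noncomputable def mult {K : Type*} [Field K]
    (L : Finset (Set (Projectivization K (Fin 3 → K))))
    (P : Projectivization K (Fin 3 → K)) : ℕ :=
  (L.filter fun ℓ => P ∈ ℓ).card

/-- Three points of `ℙ²` are collinear if some line contains all of them. -/
def Collinear3 {K : Type*} [Field K] (P₀ P₁ P₂ : Projectivization K (Fin 3 → K)) : Prop :=
  ∃ ℓ : Set (Projectivization K (Fin 3 → K)), IsLine ℓ ∧ P₀ ∈ ℓ ∧ P₁ ∈ ℓ ∧ P₂ ∈ ℓ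

lemma ker_eq {K : Type*} [Field K] (P Q : Projectivization K (Fin 3 → K)) (hPQ : P ≠ Q)
    (φ : Module.Dual K (Fin 3 → K)) (hφ : φ ≠ 0) (hP : φ P.rep = 0) (hQ : φ Q.rep = 0) :
    LinearMap.ker φ = Submodule.span K {P.rep, Q.rep} := by
  have hind : LinearIndependent K ![P.rep, Q.rep] := by
    have := (Projectivization.independent_pair_iff_ne P Q).2 hPQ
    rw [Projectivization.independent_iff] at this
    convert this using 1
    ext i; fin_cases i <;> rfl
    rfl
  have hle : Submodule.span K {P.rep, Q.rep} ≤ LinearMap.ker φ := by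
    rw [Submodule.span_le]
    rintro x (rfl | rfl) <;> simpa
  have hr : Module.finrank K (Submodule.span K ({P.rep, Q.rep} : Set (Fin 3 → K))) = 2 := by
    have h := finrank_span_eq_card hind
    have hr2 : Set.range ![P.rep, Q.rep] = {P.rep, Q.rep} := by
      ext x; simp [Fin.exists_fin_two]; tauto
    rw [hr2] at h
    simpa using h
  have hrange : LinearMap.range φ = ⊤ := by
    obtain ⟨x, hx⟩ : ∃ x, φ x ≠ 0 := by
      by_contra h; push_neg at h; exact hφ (LinearMap.ext h)
    rw [eq_top_iff]
    intro c _
    exact ⟨(c / φ x) • x, by rw [map_smul, smul_eq_mul, div_mul_cancel₀ c hx]⟩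
  have hker : Module.finrank K (LinearMap.ker φ) = 2 := by
    have h1 := LinearMap.finrank_range_add_finrank_ker φ
    rw [hrange] at h1
    simp [Module.finrank_fin_fun] at h1
    omega
  exact (Submodule.eq_of_le_of_finrank_le hle (by rw [hr, hker])).symm

lemma line_unique {K : Type*} [Field K] {ℓ₁ ℓ₂ : Set (Projectivization K (Fin 3 → K))}
    (h₁ : IsLine ℓ₁) (h₂ : IsLine ℓ₂) {P Q : Projectivization K (Fin 3 → K)} (hPQ : P ≠ Q)
    (hP₁ : P ∈ ℓ₁) (hQ₁ : Q ∈ ℓ₁) (hP₂ : P ∈ ℓ₂) (hQ₂ : Q ∈ ℓ₂) : ℓ₁ = ℓ₂ := by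
  obtain ⟨φ₁, hφ₁, rfl⟩ := h₁
  obtain ⟨φ₂, hφ₂, rfl⟩ := h₂
  have k₁ := ker_eq P Q hPQ φ₁ hφ₁ hP₁ hQ₁
  have k₂ := ker_eq P Q hPQ φ₂ hφ₂ hP₂ hQ₂
  ext R
  constructor <;> intro h
  · have : R.rep ∈ LinearMap.ker φ₁ := h
    rw [k₁, ← k₂] at this; exact this
  · have : R.rep ∈ LinearMap.ker φ₂ := h
    rw [k₂, ← k₁] at this; exact this

theorem stmt_5 {K : Type*} [Field K] (d : ℕ)
    (L : Finset (Set (Projectivization K (Fin 3 → K))))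
    (hL : ∀ ℓ ∈ L, IsLine ℓ) (hcard : L.card = d)
    (P₀ P₁ P₂ : Projectivization K (Fin 3 → K))
    (h01 : P₀ ≠ P₁) (h02 : P₀ ≠ P₂) (h12 : P₁ ≠ P₂)
    (hsum : mult L P₀ + mult L P₁ + mult L P₂ = d + 3) :
    ¬ Collinear3 P₀ P₁ P₂ ∧
    (∃ ℓ ∈ L, P₀ ∈ ℓ ∧ P₁ ∈ ℓ) ∧
    (∃ ℓ ∈ L, P₀ ∈ ℓ ∧ P₂ ∈ ℓ) ∧
    (∃ ℓ ∈ L, P₁ ∈ ℓ ∧ P₂ ∈ ℓ) ∧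
    ∀ ℓ ∈ L, P₀ ∈ ℓ ∨ P₁ ∈ ℓ ∨ P₂ ∈ ℓ := by
  set A := L.filter (fun ℓ => P₀ ∈ ℓ) with hA
  set B := L.filter (fun ℓ => P₁ ∈ ℓ) with hB
  set C := L.filter (fun ℓ => P₂ ∈ ℓ) with hC
  have hmem : ∀ {ℓ}, ℓ ∈ A → ℓ ∈ L ∧ P₀ ∈ ℓ := fun h => by
    simpa [hA] using (Finset.mem_filter.1 h)
  have hmemB : ∀ {ℓ}, ℓ ∈ B → ℓ ∈ L ∧ P₁ ∈ ℓ := fun h => by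
    simpa [hB] using (Finset.mem_filter.1 h)
  have hmemC : ∀ {ℓ}, ℓ ∈ C → ℓ ∈ L ∧ P₂ ∈ ℓ := fun h => by
    simpa [hC] using (Finset.mem_filter.1 h)
  have hsum' : A.card + B.card + C.card = d + 3 := hsum
  -- pairwise intersections have at most one element
  have hAB : (A ∩ B).card ≤ 1 := by
    apply Finset.card_le_one.2
    intro a ha b hb
    simp only [Finset.mem_inter] at ha hb
    exact line_unique (hL a (hmem ha.1).1) (hL b (hmem hb.1).1) h01
      (hmem ha.1).2 (hmemB ha.2).2 (hmem hb.1).2 (hmemB hb.2).2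
  have hAC : (A ∩ C).card ≤ 1 := by
    apply Finset.card_le_one.2
    intro a ha b hb
    simp only [Finset.mem_inter] at ha hb
    exact line_unique (hL a (hmem ha.1).1) (hL b (hmem hb.1).1) h02
      (hmem ha.1).2 (hmemC ha.2).2 (hmem hb.1).2 (hmemC hb.2).2
  have hBC : (B ∩ C).card ≤ 1 := by
    apply Finset.card_le_one.2
    intro a ha b hb
    simp only [Finset.mem_inter] at ha hb
    exact line_unique (hL a (hmemB ha.1).1) (hL b (hmemB hb.1).1) h12
      (hmemB ha.1).2 (hmemC ha.2).2 (hmemB hb.1).2 (hmemC hb.2).2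
  -- inclusion–exclusion
  have u2 := Finset.card_union_add_card_inter A B
  have u3 := Finset.card_union_add_card_inter (A ∪ B) C
  have e1 : (A ∪ B) ∩ C = (A ∩ C) ∪ (B ∩ C) := Finset.union_inter_distrib_right ..
  have u4 := Finset.card_union_add_card_inter (A ∩ C) (B ∩ C)
  have e2 : (A ∩ C) ∩ (B ∩ C) = A ∩ B ∩ C := by
    ext x; simp only [Finset.mem_inter]; tauto
  rw [e1] at u3
  rw [e2] at u4
  have hUle : (A ∪ B ∪ C).card ≤ d := by
    rw [← hcard]
    apply Finset.card_le_card
    intro x hx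
    rcases Finset.mem_union.1 hx with hx | hx
    · rcases Finset.mem_union.1 hx with hx | hx
      exacts [(hmem hx).1, (hmemB hx).1]
    · exact (hmemC hx).1
  -- not collinear
  have hncol : ¬ Collinear3 P₀ P₁ P₂ := by
    rintro ⟨ℓ₀, hℓ₀, m0, m1, m2⟩
    have hABs : A ∩ B ⊆ A ∩ B ∩ C := by
      intro x hx
      have hx' := Finset.mem_inter.1 hx
      have : x = ℓ₀ := line_unique (hL x (hmem hx'.1).1) hℓ₀ h01
        (hmem hx'.1).2 (hmemB hx'.2).2 m0 m1
      refine Finset.mem_inter.2 ⟨hx, ?_⟩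
      simp [hC, (hmem hx'.1).1, this ▸ m2]
    have hACs : A ∩ C ⊆ A ∩ B ∩ C := by
      intro x hx
      have hx' := Finset.mem_inter.1 hx
      have : x = ℓ₀ := line_unique (hL x (hmem hx'.1).1) hℓ₀ h02
        (hmem hx'.1).2 (hmemC hx'.2).2 m0 m2
      refine Finset.mem_inter.2 ⟨Finset.mem_inter.2 ⟨hx'.1, ?_⟩, hx'.2⟩
      simp [hB, (hmem hx'.1).1, this ▸ m1]
    have hBCs : B ∩ C ⊆ A ∩ B ∩ C := by
      intro x hx
      have hx' := Finset.mem_inter.1 hx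
      have : x = ℓ₀ := line_unique (hL x (hmemB hx'.1).1) hℓ₀ h12
        (hmemB hx'.1).2 (hmemC hx'.2).2 m1 m2
      refine Finset.mem_inter.2 ⟨Finset.mem_inter.2 ⟨?_, hx'.1⟩, hx'.2⟩
      simp [hA, (hmemB hx'.1).1, this ▸ m0]
    have hT1 : (A ∩ B ∩ C).card ≤ 1 :=
      le_trans (Finset.card_le_card (Finset.inter_subset_left)) hAB
    have l1 := Finset.card_le_card hABs
    have l2 := Finset.card_le_card hACs
    have l3 := Finset.card_le_card hBCs
    omega
  have hT0 : (A ∩ B ∩ C).card = 0 := by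
    rw [Finset.card_eq_zero, Finset.eq_empty_iff_forall_notMem]
    intro x hx
    have hx' := Finset.mem_inter.1 hx
    have hx'' := Finset.mem_inter.1 hx'.1
    exact hncol ⟨x, hL x (hmem hx''.1).1, (hmem hx''.1).2, (hmemB hx''.2).2,
      (hmemC hx'.2).2⟩
  have hAB1 : (A ∩ B).card = 1 := by omega
  have hAC1 : (A ∩ C).card = 1 := by omega
  have hUeq : (A ∪ B ∪ C).card = d := by omega
  have hBC1 : (B ∩ C).card = 1 := by omega
  have hLeq : L ⊆ A ∪ B ∪ C := by
    apply Finset.subset_iff.2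
    have := Finset.eq_of_subset_of_card_le (t := L) (s := A ∪ B ∪ C) ?_ (by omega)
    · intro x hx; rw [this]; exact hx
    · intro x hx
      rcases Finset.mem_union.1 hx with hx | hx
      · rcases Finset.mem_union.1 hx with hx | hx
        exacts [(hmem hx).1, (hmemB hx).1]
      · exact (hmemC hx).1
  refine ⟨hncol, ?_, ?_, ?_, ?_⟩
  · obtain ⟨x, hx⟩ := Finset.card_pos.1 (by omega : 0 < (A ∩ B).card)
    have hx' := Finset.mem_inter.1 hx
    exact ⟨x, (hmem hx'.1).1, (hmem hx'.1).2, (hmemB hx'.2).2⟩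
  · obtain ⟨x, hx⟩ := Finset.card_pos.1 (by omega : 0 < (A ∩ C).card)
    have hx' := Finset.mem_inter.1 hx
    exact ⟨x, (hmem hx'.1).1, (hmem hx'.1).2, (hmemC hx'.2).2⟩
  · obtain ⟨x, hx⟩ := Finset.card_pos.1 (by omega : 0 < (B ∩ C).card)
    have hx' := Finset.mem_inter.1 hx
    exact ⟨x, (hmemB hx'.1).1, (hmemB hx'.1).2, (hmemC hx'.2).2⟩
  · intro ℓ hℓ
    rcases Finset.mem_union.1 (hLeq hℓ) with hx | hx
    · rcases Finset.mem_union.1 hx with hx | hx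
      exacts [Or.inl (hmem hx).2, Or.inr (Or.inl (hmemB hx).2)]
    · exact Or.inr (Or.inr (hmemC hx).2)
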